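/- Let α, γ ∈ ℍ with |α| < 1 and αγ ≠ 1, γα ≠ 1. Define γ_ℓ = (1 − γα)⁻¹ γ (1 − γα) and γ_r = (1 − αγ) γ (1 − αγ)⁻¹. Then Re(γ_ℓ ᾱ) = Re(ᾱ γ_r) and |1 − γ_ℓ ᾱ| = |1 − ᾱ γ_r|. -/
import Mathlib

private lemma re_mul_comm (a b : Quaternion ℝ) : (a * b).re = (b * a).re := by
  simp [Quaternion.re_mul]; ring

/-- With γ_ℓ = (1−γα)⁻¹γ(1−γα) and γ_r = (1−αγ)γ(1−αγ)⁻¹, one has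
Re(γ_ℓᾱ) = Re(ᾱγ_r) and |1 − γ_ℓᾱ| = |1 − ᾱγ_r|. -/
theorem left_right_denominators (α γ : Quaternion ℝ) (hα : ‖α‖ < 1)
    (h1 : α * γ ≠ 1) (h2 : γ * α ≠ 1) :
    ((((1 - γ * α)⁻¹ * γ * (1 - γ * α)) * star α).re =
        (star α * ((1 - α * γ) * γ * (1 - α * γ)⁻¹)).re) ∧
    ‖1 - ((1 - γ * α)⁻¹ * γ * (1 - γ * α)) * star α‖ =
        ‖1 - star α * ((1 - α * γ) * γ * (1 - α * γ)⁻¹)‖ := by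
  have hB : (1 - α * γ) ≠ 0 := sub_ne_zero.mpr (Ne.symm h1)
  have hA : (1 - γ * α) ≠ 0 := sub_ne_zero.mpr (Ne.symm h2)
  by_cases hα0 : α = 0
  · simp [hα0]
  have hsα : star α ≠ 0 := star_ne_zero.mpr hα0
  set A := 1 - γ * α with hAdef
  set B := 1 - α * γ with hBdef
  have key1 : A * star α = star α * B := by
    have : γ * (α * star α) = (star α * α) * γ := by
      rw [Quaternion.self_mul_star, Quaternion.star_mul_self,
        ← Quaternion.coe_commutes]
    rw [hAdef, hBdef]
    rw [sub_mul, mul_sub, one_mul, mul_one]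
    rw [mul_assoc, this, mul_assoc]
  have key2 : A⁻¹ * γ = γ * B⁻¹ := by
    have h : γ * B = A * γ := by rw [hAdef, hBdef]; noncomm_ring
    have := congrArg (fun x => A⁻¹ * x * B⁻¹) h
    simpa [mul_assoc, mul_inv_cancel₀ hB, inv_mul_cancel_left₀ hA] using this
  set w := star α * B with hwdef
  have hw : w ≠ 0 := mul_ne_zero hsα hB
  have hx : A⁻¹ * γ * A * star α = γ * B⁻¹ * w := by
    rw [mul_assoc, key1, key2]
  have hy : star α * (B * γ * B⁻¹) = w * (A⁻¹ * γ * A * star α) * w⁻¹ := by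
    rw [hx]
    simp only [mul_assoc, mul_inv_cancel₀ hw, mul_one]
    rw [hwdef]
    simp only [mul_assoc]
  rw [hy]
  constructor
  · have h := re_mul_comm (w * (A⁻¹ * γ * A * star α)) w⁻¹
    rw [h, ← mul_assoc, inv_mul_cancel₀ hw, one_mul]
  · set X := A⁻¹ * γ * A * star α with hXdef
    have h1w : (1 : Quaternion ℝ) - w * X * w⁻¹ = w * (1 - X) * w⁻¹ := by
      rw [mul_sub, sub_mul, mul_one, mul_inv_cancel₀ hw]
    rw [h1w, norm_mul, norm_mul, norm_inv]
    have : ‖w‖ ≠ 0 := norm_ne_zero_iff.mpr hw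
    rw [mul_comm ‖w‖, mul_assoc, mul_inv_cancel₀ this, mul_one]
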